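/- Let A, B, C, t be real numbers and define ℓ : ℝ⁵ → ℝ by ℓ(x₁,x₂,x₃,x₄,z) = A(x₁+x₂+x₃+x₄) + Bz + C, and f = ℓ^t on the open set U = {ℓ > 0}. Then at every point of U the left-hand side of equation (★) evaluated at f equals −4Bt·[(4A²+B²)t² + (2A²+B²)t − 2A²]·ℓ^{3t−3}. In particular, f satisfies (★) on U if and only if Bt[(4A²+B²)t² + (2A²+B²)t − 2A²] = 0. -/

import Mathlib

/-- The partial derivative of `f : ℝ⁵ → ℝ` in the `i`-th coordinate direction
(coordinates are `x₁, x₂, x₃, x₄` for indices `0,1,2,3` and `z` for index `4`). -/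
noncomputable def pd (i : Fin 5) (f : (Fin 5 → ℝ) → ℝ) : (Fin 5 → ℝ) → ℝ :=
  fun x => fderiv ℝ f x (Pi.single i 1)

/-- The left-hand side of equation (★):
`∑_{i=1}^{4} ( f² f_{iiz} − 2 f fᵢ f_{iz} + f f_z f_{ii} − 4 f_z fᵢ² )
  + 4 f_z ( f f_{zz} − 2 f_z² )`. -/
noncomputable def starLHS (f : (Fin 5 → ℝ) → ℝ) (x : Fin 5 → ℝ) : ℝ :=
  (∑ i : Fin 4,
      ((f x) ^ 2 * pd 4 (pd i.castSucc (pd i.castSucc f)) x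
        - 2 * f x * pd i.castSucc f x * pd 4 (pd i.castSucc f) x
        + f x * pd 4 f x * pd i.castSucc (pd i.castSucc f) x
        - 4 * pd 4 f x * (pd i.castSucc f x) ^ 2))
    + 4 * pd 4 f x * (f x * pd 4 (pd 4 f) x - 2 * (pd 4 f x) ^ 2)

lemma pd_congr {f g : (Fin 5 → ℝ) → ℝ} {x : Fin 5 → ℝ} (h : f =ᶠ[nhds x] g) (i : Fin 5) :
    pd i f x = pd i g x := by
  unfold pd; rw [h.fderiv_eq]

/-- for `ℓ = A(x₁+x₂+x₃+x₄)+Bz+C` and `f = ℓ^t`, on `{ℓ > 0}` the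
left-hand side of (★) equals `−4Bt[(4A²+B²)t²+(2A²+B²)t−2A²]·ℓ^{3t−3}`; in particular
`f` satisfies (★) on `{ℓ > 0}` iff `Bt[(4A²+B²)t²+(2A²+B²)t−2A²] = 0`. -/
theorem stmt_0 (A B C t : ℝ) (ℓ f : (Fin 5 → ℝ) → ℝ)
    (hℓ : ∀ x, ℓ x = A * (x 0 + x 1 + x 2 + x 3) + B * x 4 + C)
    (hf : ∀ x, f x = ℓ x ^ t) :
    (∀ x, 0 < ℓ x →
      starLHS f x =
        -4 * B * t * ((4 * A ^ 2 + B ^ 2) * t ^ 2 + (2 * A ^ 2 + B ^ 2) * t - 2 * A ^ 2)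
          * ℓ x ^ (3 * t - 3)) ∧
    ((∀ x, 0 < ℓ x → starLHS f x = 0) ↔
      B * t * ((4 * A ^ 2 + B ^ 2) * t ^ 2 + (2 * A ^ 2 + B ^ 2) * t - 2 * A ^ 2) = 0) := by
  set c : Fin 5 → ℝ := ![A, A, A, A, B] with hc
  set D : (Fin 5 → ℝ) →L[ℝ] ℝ := ∑ i, c i • (ContinuousLinearMap.proj i) with hDdef
  have hD : ∀ v : Fin 5 → ℝ, D v = ∑ i, c i * v i := by
    intro v; simp [hDdef, ContinuousLinearMap.sum_apply]
  have hDi : ∀ i, D (Pi.single i 1) = c i := by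
    intro i; rw [hD]; simp [Pi.single_apply]
  have hℓeq : ℓ = fun x => D x + C := by
    funext x
    rw [hℓ x, hD, Fin.sum_univ_five]
    simp [hc]
    ring
  have hℓD : ∀ x, HasFDerivAt ℓ D x := by
    intro x; rw [hℓeq]; exact D.hasFDerivAt.add_const C
  have hUopen : IsOpen {y : Fin 5 → ℝ | 0 < ℓ y} := by
    have : Continuous ℓ := by rw [hℓeq]; exact D.continuous.add continuous_const
    exact isOpen_lt continuous_const this
  -- key: derivative of k * ℓ^s on {ℓ > 0}
  have key : ∀ (k s : ℝ) (y : Fin 5 → ℝ), 0 < ℓ y → ∀ i,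
      pd i (fun w => k * ℓ w ^ s) y = k * (s * ℓ y ^ (s - 1)) * c i := by
    intro k s y hy i
    have h1 : HasFDerivAt (fun w => ℓ w ^ s) ((s * ℓ y ^ (s - 1)) • D) y :=
      (hℓD y).rpow_const (Or.inl (ne_of_gt hy))
    have h2 : HasFDerivAt (fun w => k * ℓ w ^ s) (k • ((s * ℓ y ^ (s - 1)) • D)) y :=
      h1.const_mul k
    unfold pd
    rw [h2.fderiv]
    simp [hDi i]
    ring
  have d1 : ∀ (i : Fin 5) (y : Fin 5 → ℝ), 0 < ℓ y →
      pd i f y = (t * ℓ y ^ (t - 1)) * c i := by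
    intro i y hy
    have : f = fun w => (1 : ℝ) * ℓ w ^ t := by funext w; rw [hf w]; ring
    rw [this, key 1 t y hy i]; ring
  have d2 : ∀ (i j : Fin 5) (y : Fin 5 → ℝ), 0 < ℓ y →
      pd j (pd i f) y = (t * c i) * ((t - 1) * ℓ y ^ (t - 2)) * c j := by
    intro i j y hy
    have hev : pd i f =ᶠ[nhds y] fun w => (t * c i) * ℓ w ^ (t - 1) := by
      filter_upwards [hUopen.mem_nhds hy] with w hw
      rw [d1 i w hw]; ring
    rw [pd_congr hev j, key (t * c i) (t - 1) y hy j]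
    ring_nf
  have d3 : ∀ (i j k : Fin 5) (y : Fin 5 → ℝ), 0 < ℓ y →
      pd k (pd j (pd i f)) y = (t * c i) * ((t - 1) * c j) * ((t - 2) * ℓ y ^ (t - 3)) * c k := by
    intro i j k y hy
    have hev : pd j (pd i f) =ᶠ[nhds y] fun w => ((t * c i) * ((t - 1) * c j)) * ℓ w ^ (t - 2) := by
      filter_upwards [hUopen.mem_nhds hy] with w hw
      rw [d2 i j w hw]; ring
    rw [pd_congr hev k, key _ (t - 2) y hy k]
    ring_nf
  have hcA : ∀ i : Fin 4, c i.castSucc = A := by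
    intro i; fin_cases i <;> rfl
  have hc4 : c 4 = B := rfl
  have main : ∀ x, 0 < ℓ x →
      starLHS f x =
        -4 * B * t * ((4 * A ^ 2 + B ^ 2) * t ^ 2 + (2 * A ^ 2 + B ^ 2) * t - 2 * A ^ 2)
          * ℓ x ^ (3 * t - 3) := by
    intro x hx
    have D1 : ∀ i : Fin 5, pd i f x = (t * ℓ x ^ (t - 1)) * c i := fun i => d1 i x hx
    have D2 : ∀ i j : Fin 5, pd j (pd i f) x = (t * c i) * ((t - 1) * ℓ x ^ (t - 2)) * c j :=
      fun i j => d2 i j x hx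
    have D3 : ∀ i j k : Fin 5, pd k (pd j (pd i f)) x
        = (t * c i) * ((t - 1) * c j) * ((t - 2) * ℓ x ^ (t - 3)) * c k :=
      fun i j k => d3 i j k x hx
    have e0 : ℓ x ^ t = ℓ x ^ (t - 3) * (ℓ x) ^ (3 : ℕ) := by
      rw [← Real.rpow_natCast (ℓ x) 3, ← Real.rpow_add hx]; congr 1; ring
    have e1 : ℓ x ^ (t - 1) = ℓ x ^ (t - 3) * (ℓ x) ^ (2 : ℕ) := by
      rw [← Real.rpow_natCast (ℓ x) 2, ← Real.rpow_add hx]; congr 1; ring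
    have e2 : ℓ x ^ (t - 2) = ℓ x ^ (t - 3) * (ℓ x) ^ (1 : ℕ) := by
      rw [← Real.rpow_natCast (ℓ x) 1, ← Real.rpow_add hx]; congr 1; ring
    have e3 : ℓ x ^ (3 * t - 3) = (ℓ x ^ (t - 3)) ^ (3 : ℕ) * (ℓ x) ^ (6 : ℕ) := by
      rw [← Real.rpow_natCast (ℓ x ^ (t - 3)) 3, ← Real.rpow_natCast (ℓ x) 6,
        ← Real.rpow_mul hx.le, ← Real.rpow_add hx]
      congr 1; ring
    unfold starLHS
    simp only [hf, D1, D2, D3, hcA, hc4, Fin.sum_univ_four]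
    rw [e0, e1, e2, e3]
    ring
  refine ⟨main, ?_, ?_⟩
  · intro h0
    by_cases hB : B = 0
    · simp [hB]
    · set x₀ : Fin 5 → ℝ := Function.update (0 : Fin 5 → ℝ) 4 ((1 - C) / B) with hx₀
      have hℓx₀ : ℓ x₀ = 1 := by
        rw [hℓ x₀]
        simp [hx₀, Function.update]
        field_simp
        ring
      have h1 : (0:ℝ) < ℓ x₀ := by rw [hℓx₀]; norm_num
      have := h0 x₀ h1
      rw [main x₀ h1, hℓx₀, Real.one_rpow] at this
      linarith [this]
  · intro hK x hx
    rw [main x hx]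
    linear_combination (-4 * ℓ x ^ (3 * t - 3)) * hK
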